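/- Let B be a finite set of monomials of degree ≤ d connected to 1, |B| = r, and let Λ be a linear form defined on the span of B·B^+ whose associated Hankel matrix H^B_Λ = (Λ(b b'))_{b,b'∈B} is invertible, and such that the formal multiplication operators M_i = (H^B_Λ)^{-1} H^B_{x_i⋆Λ} pairwise commute: M_i M_j = M_j M_i for all 1 ≤ i < j ≤ n. Then Λ admits a unique extension Λ̃ ∈ R* such that the Hankel operator H_{Λ̃} has rank r and B is a basis of A_{Λ̃} = R/I_{Λ̃}. -/

import Mathlib

open MvPolynomial

/-- The Hankel operator `H_Λ : p ↦ (q ↦ Λ(pq))`. -/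
noncomputable def hankelOp (K : Type*) [Field K] (n : ℕ)
    (Λ : Module.Dual K (MvPolynomial (Fin n) K)) :
    MvPolynomial (Fin n) K →ₗ[K] Module.Dual K (MvPolynomial (Fin n) K) :=
  (LinearMap.mul K (MvPolynomial (Fin n) K)).compr₂ Λ

/-- The kernel ideal `I_Λ = {p : ∀ q, Λ(pq) = 0}`. -/
def hankelIdeal (K : Type*) [Field K] (n : ℕ)
    (Λ : Module.Dual K (MvPolynomial (Fin n) K)) : Ideal (MvPolynomial (Fin n) K) where
  carrier := {p | ∀ q, Λ (p * q) = 0}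
  add_mem' := by
    intro a b ha hb q
    rw [Set.mem_setOf_eq] at ha hb
    rw [add_mul, map_add, ha q, hb q, add_zero]
  zero_mem' := by
    intro q
    rw [zero_mul, map_zero]
  smul_mem' := by
    intro c p hp q
    rw [Set.mem_setOf_eq] at hp
    have h : (c • p) * q = p * (c * q) := by rw [smul_eq_mul]; ring
    rw [h]
    exact hp _

/-- The evaluation functional `1_ζ : p ↦ p(ζ)`. -/
noncomputable def evalDual (K : Type*) [Field K] (n : ℕ) (ζ : Fin n → K) :
    Module.Dual K (MvPolynomial (Fin n) K) :=
  (MvPolynomial.aeval ζ).toLinearMap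

open Matrix

namespace FlatExt
variable {K : Type*} [Field K] {n r : ℕ}

/-! ### Evaluation of multivariate polynomials at commuting matrices -/

noncomputable abbrev adjCR (M : Fin n → Matrix (Fin r) (Fin r) K)
    (hc : ∀ i i', M i * M i' = M i' * M i) :
    CommRing (Algebra.adjoin K (Set.range M)) :=
  Algebra.adjoinCommRingOfComm K (by rintro a ⟨i, rfl⟩ c ⟨i', rfl⟩; exact hc i i')

noncomputable def aevalA (M : Fin n → Matrix (Fin r) (Fin r) K)
    (hc : ∀ i i', M i * M i' = M i' * M i) :
    MvPolynomial (Fin n) K →ₐ[K] Algebra.adjoin K (Set.range M) :=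
  letI := adjCR M hc
  MvPolynomial.aeval (fun i => (⟨M i, Algebra.subset_adjoin (Set.mem_range_self i)⟩ :
    Algebra.adjoin K (Set.range M)))

noncomputable def aevalM (M : Fin n → Matrix (Fin r) (Fin r) K)
    (hc : ∀ i i', M i * M i' = M i' * M i) (p : MvPolynomial (Fin n) K) :
    Matrix (Fin r) (Fin r) K :=
  (aevalA M hc p : Matrix (Fin r) (Fin r) K)

variable (M : Fin n → Matrix (Fin r) (Fin r) K) (hc : ∀ i i', M i * M i' = M i' * M i)

theorem aevalM_one : aevalM M hc 1 = 1 := by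
  unfold aevalM; rw [_root_.map_one]; rfl

theorem aevalM_mul (p q : MvPolynomial (Fin n) K) :
    aevalM M hc (p * q) = aevalM M hc p * aevalM M hc q := by
  unfold aevalM; rw [_root_.map_mul]; rfl

theorem aevalM_comm (p q : MvPolynomial (Fin n) K) :
    aevalM M hc p * aevalM M hc q = aevalM M hc q * aevalM M hc p := by
  rw [← aevalM_mul, ← aevalM_mul, mul_comm]

theorem aevalM_add (p q : MvPolynomial (Fin n) K) :
    aevalM M hc (p + q) = aevalM M hc p + aevalM M hc q := by
  unfold aevalM; rw [_root_.map_add]; rfl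

theorem aevalM_smul (c : K) (p : MvPolynomial (Fin n) K) :
    aevalM M hc (c • p) = c • aevalM M hc p := by
  unfold aevalM; rw [_root_.map_smul]; rfl

theorem aevalM_X (i : Fin n) : aevalM M hc (X i) = M i := by
  unfold aevalM aevalA; simp only [MvPolynomial.aeval_X]

theorem aevalM_X_mul (i : Fin n) (p : MvPolynomial (Fin n) K) :
    aevalM M hc (X i * p) = M i * aevalM M hc p := by
  rw [aevalM_mul, aevalM_X]

theorem aevalM_C (a : K) : aevalM M hc (C a) = a • 1 := by
  unfold aevalM aevalA
  letI := adjCR M hc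
  rw [MvPolynomial.aeval_C, Algebra.algebraMap_eq_smul_one]
  rfl

/-! ### The coordinate map `ψ` -/

noncomputable def psiL (j0 : Fin r) : MvPolynomial (Fin n) K →ₗ[K] (Fin r → K) where
  toFun p := aevalM M hc p *ᵥ Pi.single j0 1
  map_add' p q := by
    show aevalM M hc (p + q) *ᵥ Pi.single j0 1 = _
    rw [aevalM_add, Matrix.add_mulVec]
  map_smul' a p := by
    show aevalM M hc (a • p) *ᵥ Pi.single j0 1 = a • (aevalM M hc p *ᵥ Pi.single j0 1)
    rw [aevalM_smul, Matrix.smul_mulVec]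

theorem psiL_apply (j0 : Fin r) (p : MvPolynomial (Fin n) K) :
    psiL M hc j0 p = aevalM M hc p *ᵥ Pi.single j0 1 := rfl

theorem psiL_one (j0 : Fin r) : psiL M hc j0 1 = Pi.single j0 1 := by
  rw [psiL_apply, aevalM_one, Matrix.one_mulVec]

theorem psiL_X_mul (j0 : Fin r) (i : Fin n) (p : MvPolynomial (Fin n) K) :
    psiL M hc j0 (X i * p) = M i *ᵥ psiL M hc j0 p := by
  rw [psiL_apply, psiL_apply, aevalM_X_mul, Matrix.mulVec_mulVec]

variable (HB : Matrix (Fin r) (Fin r) K)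

theorem aevalM_symm (hHB : HBᵀ = HB) (hM : ∀ i, (HB * M i)ᵀ = HB * M i)
    (p : MvPolynomial (Fin n) K) :
    (HB * aevalM M hc p)ᵀ = HB * aevalM M hc p := by
  have hMH : ∀ i, (M i)ᵀ * HB = HB * M i := by
    intro i
    conv_lhs => rw [← hHB]
    rw [← Matrix.transpose_mul, hM i]
  induction p using MvPolynomial.induction_on with
  | C a =>
    rw [aevalM_C, mul_smul_comm, Matrix.transpose_smul, mul_one, hHB]
  | add p q ihp ihq =>
    rw [aevalM_add, mul_add, Matrix.transpose_add, ihp, ihq]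
  | mul_X p i ih =>
    rw [aevalM_mul, aevalM_X, ← mul_assoc, Matrix.transpose_mul, ih, ← mul_assoc, hMH i,
      mul_assoc, mul_assoc, ← aevalM_X M hc i, aevalM_comm]

theorem keyProd (hHB : HBᵀ = HB) (hM : ∀ i, (HB * M i)ᵀ = HB * M i) (j0 : Fin r)
    (p q : MvPolynomial (Fin n) K) :
    (HB *ᵥ psiL M hc j0 (p * q)) j0 = psiL M hc j0 p ⬝ᵥ (HB *ᵥ psiL M hc j0 q) := by
  have h1 : psiL M hc j0 (p * q) = aevalM M hc p *ᵥ psiL M hc j0 q := by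
    rw [psiL_apply, psiL_apply, aevalM_mul, ← Matrix.mulVec_mulVec]
  have h2 : HB * aevalM M hc p = (aevalM M hc p)ᵀ * HB := by
    conv_lhs => rw [← aevalM_symm M hc HB hHB hM p]
    rw [Matrix.transpose_mul, hHB]
  rw [h1, Matrix.mulVec_mulVec, h2, ← Matrix.mulVec_mulVec]
  have h3 : psiL M hc j0 p = fun k => aevalM M hc p k j0 := by
    rw [psiL_apply, Matrix.mulVec_single]
    simp
    rfl
  rw [h3]
  simp [Matrix.mulVec, dotProduct, Matrix.transpose_apply]

/-! ### The rank-`r` factorization operator -/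

noncomputable def dotHB (j0 : Fin r) (v : Fin r → K) :
    Module.Dual K (MvPolynomial (Fin n) K) where
  toFun q := v ⬝ᵥ (HB *ᵥ psiL M hc j0 q)
  map_add' q q' := by
    show v ⬝ᵥ (HB *ᵥ psiL M hc j0 (q + q')) =
      v ⬝ᵥ (HB *ᵥ psiL M hc j0 q) + v ⬝ᵥ (HB *ᵥ psiL M hc j0 q')
    rw [_root_.map_add, Matrix.mulVec_add, dotProduct_add]
  map_smul' a q := by
    show v ⬝ᵥ (HB *ᵥ psiL M hc j0 (a • q)) = a • (v ⬝ᵥ (HB *ᵥ psiL M hc j0 q))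
    rw [_root_.map_smul, Matrix.mulVec_smul, dotProduct_smul]

noncomputable def LopD (j0 : Fin r) :
    (Fin r → K) →ₗ[K] Module.Dual K (MvPolynomial (Fin n) K) where
  toFun := dotHB M hc HB j0
  map_add' v v' := LinearMap.ext fun q => by
    simp only [dotHB, LinearMap.coe_mk, AddHom.coe_mk, LinearMap.add_apply,
      add_dotProduct]
  map_smul' a v := LinearMap.ext fun q => by
    simp only [dotHB, LinearMap.coe_mk, AddHom.coe_mk, LinearMap.smul_apply,
      smul_dotProduct, RingHom.id_apply, smul_eq_mul]

theorem LopD_apply (j0 : Fin r) (v : Fin r → K) (q : MvPolynomial (Fin n) K) :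
    LopD M hc HB j0 v q = v ⬝ᵥ (HB *ᵥ psiL M hc j0 q) := rfl

/-! ### The inclusion of `K^r` as the span of `B` -/

noncomputable def sigmaB (b : Fin r → (Fin n →₀ ℕ)) :
    (Fin r → K) →ₗ[K] MvPolynomial (Fin n) K where
  toFun c := ∑ j, c j • monomial (b j) (1 : K)
  map_add' c c' := by simp [add_smul, Finset.sum_add_distrib]
  map_smul' a c := by simp [Finset.smul_sum, smul_smul]

theorem sigmaB_apply (b : Fin r → (Fin n →₀ ℕ)) (c : Fin r → K) :
    sigmaB b c = ∑ j, c j • monomial (b j) (1 : K) := rfl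

theorem sigmaB_single (b : Fin r → (Fin n →₀ ℕ)) (j : Fin r) :
    sigmaB b (Pi.single j (1 : K)) = monomial (b j) (1 : K) := by
  rw [sigmaB_apply, Finset.sum_eq_single j]
  · simp
  · intro k _ hk
    simp [Pi.single_eq_of_ne hk]
  · simp

theorem range_sigmaB (b : Fin r → (Fin n →₀ ℕ)) :
    LinearMap.range (sigmaB b : (Fin r → K) →ₗ[K] MvPolynomial (Fin n) K) =
      Submodule.span K (Set.range fun j => (monomial (b j) (1 : K) : MvPolynomial (Fin n) K)) := by
  apply le_antisymm
  · rintro x ⟨c, rfl⟩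
    show (∑ j, c j • monomial (b j) (1 : K)) ∈ _
    exact Submodule.sum_mem _ fun j _ => Submodule.smul_mem _ _
      (Submodule.subset_span (Set.mem_range_self j))
  · rw [Submodule.span_le]
    rintro x ⟨j, rfl⟩
    exact ⟨Pi.single j 1, sigmaB_single b j⟩

theorem univ_sum_single_smul (c : Fin r → K) :
    ∑ j, c j • (Pi.single j (1 : K) : Fin r → K) = c := by
  simp only [← Pi.single_smul, smul_eq_mul, mul_one, Finset.univ_sum_single]

/-! ### Generalities on monomials -/

theorem X_mul_monomial' (i : Fin n) (β : Fin n →₀ ℕ) :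
    (X i : MvPolynomial (Fin n) K) * monomial β 1 = monomial (Finsupp.single i 1 + β) 1 := by
  rw [X, monomial_mul, one_mul]

theorem monomial_zero_one : (monomial (0 : Fin n →₀ ℕ) (1 : K)) = 1 := by
  rw [monomial_zero', C_1]

theorem degree_decomp (α : Fin n →₀ ℕ) (hne : α ≠ 0) :
    ∃ (i : Fin n) (β : Fin n →₀ ℕ), α = Finsupp.single i 1 + β ∧
      β.sum (fun _ e => e) + 1 = α.sum (fun _ e => e) := by
  obtain ⟨i, hi⟩ := Finsupp.support_nonempty_iff.mpr hne
  have hαi : 1 ≤ α i := Nat.one_le_iff_ne_zero.mpr (Finsupp.mem_support_iff.mp hi)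
  have h1 : α = Finsupp.single i 1 + (α - Finsupp.single i 1) := by
    ext a
    rcases eq_or_ne a i with rfl | hne'
    · simp [Finsupp.single_apply]
      omega
    · simp [Finsupp.single_apply, Ne.symm hne', Finsupp.tsub_apply]
  refine ⟨i, α - Finsupp.single i 1, h1, ?_⟩
  conv_rhs => rw [h1]
  rw [Finsupp.sum_add_index' (fun _ => rfl) (fun _ _ _ => rfl),
    Finsupp.sum_single_index rfl]
  omega

theorem mono_induction (P : (Fin n →₀ ℕ) → Prop) (h0 : P 0)
    (hs : ∀ (i : Fin n) (α : Fin n →₀ ℕ), P α → P (Finsupp.single i 1 + α)) :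
    ∀ α, P α := by
  suffices H : ∀ (d : ℕ) (α : Fin n →₀ ℕ), α.sum (fun _ e => e) = d → P α from
    fun α => H _ α rfl
  intro d
  induction d using Nat.strong_induction_on with
  | _ d ih =>
  intro α hd
  rcases eq_or_ne α 0 with rfl | hne
  · exact h0
  · obtain ⟨i, β, rfl, hsum⟩ := degree_decomp α hne
    exact hs i β (ih (β.sum fun _ e => e) (by omega) β rfl)

end FlatExt

open FlatExt



theorem hankelOp_apply {K : Type*} [Field K] {n : ℕ}
    (Λ : Module.Dual K (MvPolynomial (Fin n) K)) (p q : MvPolynomial (Fin n) K) :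
    hankelOp K n Λ p q = Λ (p * q) := rfl

set_option maxHeartbeats 1000000 in
/-- Flat extension theorem: if the Hankel matrix `H^B_Λ` is invertible and the formal
multiplication operators `M_i = (H^B_Λ)⁻¹ H^B_{x_i ⋆ Λ}` pairwise commute, then `Λ`
(given on the span of `B·B⁺`) admits a unique extension `Λ̃` with `rank H_Λ̃ = r` and
`B` a basis of `A_Λ̃`. -/
theorem flat_extension_of_commuting_multiplication (K : Type*) [Field K] (n r d : ℕ)
    (b : Fin r → (Fin n →₀ ℕ))
    (hinj : Function.Injective b)
    (hdeg : ∀ j, (b j).sum (fun _ e => e) ≤ d)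
    (hconn : ∀ j, b j = 0 ∨ ∃ (i : Fin n) (j' : Fin r), b j = Finsupp.single i 1 + b j')
    (Λ : Module.Dual K (MvPolynomial (Fin n) K))
    (BBp : Submodule K (MvPolynomial (Fin n) K))
    (hBBp : BBp = Submodule.span K
      ({x | ∃ j k, x = (monomial (b j) (1 : K)) * monomial (b k) 1} ∪
       {x | ∃ (i : Fin n) (j k : Fin r),
          x = X i * ((monomial (b j) (1 : K)) * monomial (b k) 1)}))
    (HB : Matrix (Fin r) (Fin r) K)
    (hHB : HB = Matrix.of fun j k => Λ ((monomial (b j) 1) * monomial (b k) 1))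
    (HBx : Fin n → Matrix (Fin r) (Fin r) K)
    (hHBx : ∀ i, HBx i = Matrix.of fun j k => Λ (X i * ((monomial (b j) 1) * monomial (b k) 1)))
    (hdet : IsUnit HB.det)
    (hcomm : ∀ i i' : Fin n,
      (HB⁻¹ * HBx i) * (HB⁻¹ * HBx i') = (HB⁻¹ * HBx i') * (HB⁻¹ * HBx i)) :
    ∃! Λt : Module.Dual K (MvPolynomial (Fin n) K),
      (∀ p ∈ BBp, Λt p = Λ p) ∧
      Module.Finite K ↥(LinearMap.range (hankelOp K n Λt)) ∧
      Module.finrank K ↥(LinearMap.range (hankelOp K n Λt)) = r ∧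
      IsCompl
        (Submodule.span K (Set.range fun j => (monomial (b j) (1 : K) : MvPolynomial (Fin n) K)))
        (LinearMap.ker (hankelOp K n Λt)) := by
    classical
  rcases Nat.eq_zero_or_pos r with hr | hr
  · -- trivial case `r = 0`
    subst hr
    have hzero : hankelOp K n (0 : Module.Dual K (MvPolynomial (Fin n) K)) = 0 :=
      LinearMap.ext fun p => LinearMap.ext fun q => rfl
    have hspan0 : Submodule.span K
        (Set.range fun j : Fin 0 => (monomial (b j) (1 : K) : MvPolynomial (Fin n) K)) = ⊥ := by
      rw [Set.range_eq_empty, Submodule.span_empty]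
    refine ⟨0, ⟨?_, ?_, ?_, ?_⟩, ?_⟩
    · intro p hp
      rw [hBBp] at hp
      have hempty : ({x | ∃ j k, x = (monomial (b j) (1 : K)) * monomial (b k) 1} ∪
          {x | ∃ (i : Fin n) (j k : Fin 0),
            x = X i * ((monomial (b j) (1 : K)) * monomial (b k) 1)} :
          Set (MvPolynomial (Fin n) K)) = ∅ := by
        ext x
        simp only [Set.mem_union, Set.mem_setOf_eq, Set.mem_empty_iff_false, iff_false]
        rintro (⟨j, -⟩ | ⟨-, j, -⟩) <;> exact j.elim0
      rw [hempty, Submodule.span_empty, Submodule.mem_bot] at hp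
      simp [hp]
    · rw [hzero, LinearMap.range_zero]
      infer_instance
    · rw [hzero, LinearMap.range_zero, finrank_bot]
    · rw [hzero, LinearMap.ker_zero, hspan0]
      exact isCompl_bot_top
    · rintro Λ' ⟨-, -, -, hcompl'⟩
      rw [hspan0] at hcompl'
      have hker : LinearMap.ker (hankelOp K n Λ') = ⊤ := by
        have := hcompl'.codisjoint
        rwa [codisjoint_iff, bot_sup_eq] at this
      apply LinearMap.ext
      intro p
      have hp : p ∈ LinearMap.ker (hankelOp K n Λ') := by rw [hker]; trivial
      have := LinearMap.ext_iff.mp (LinearMap.mem_ker.mp hp) 1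
      rw [hankelOp_apply, mul_one] at this
      simpa using this
  -- main case `0 < r`
  have hsym : ∀ a c, HB a c = HB c a := by
    intro a c
    rw [hHB]
    show Λ _ = Λ _
    rw [mul_comm]
  have hHBs : HBᵀ = HB := by
    ext a c
    rw [Matrix.transpose_apply]
    exact hsym c a
  have hHBxs : ∀ i, (HBx i)ᵀ = HBx i := by
    intro i
    ext a c
    rw [Matrix.transpose_apply, hHBx i]
    show Λ _ = Λ _
    rw [mul_comm (monomial (b c) (1 : K))]
  set M : Fin n → Matrix (Fin r) (Fin r) K := fun i => HB⁻¹ * HBx i with hMdef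
  have hc : ∀ i i', M i * M i' = M i' * M i := fun i i' => hcomm i i'
  have hHBM : ∀ i, HB * M i = HBx i := by
    intro i
    show HB * (HB⁻¹ * HBx i) = HBx i
    rw [← mul_assoc, Matrix.mul_nonsing_inv HB hdet, one_mul]
  have hMsym : ∀ i, (HB * M i)ᵀ = HB * M i := fun i => by rw [hHBM i]; exact hHBxs i
  have hUnit : IsUnit HB := (Matrix.isUnit_iff_isUnit_det HB).mpr hdet
  have hmvinj : Function.Injective HB.mulVec := Matrix.mulVec_injective_iff_isUnit.mpr hUnit
  have hvminj : Function.Injective HB.vecMul := Matrix.vecMul_injective_iff_isUnit.mpr hUnit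
  obtain ⟨j0, hj0⟩ : ∃ j0, b j0 = 0 := by
    obtain ⟨j0, -, hmin⟩ := Finset.exists_min_image Finset.univ
      (fun j => (b j).sum fun _ e => e) ⟨⟨0, hr⟩, Finset.mem_univ _⟩
    refine ⟨j0, ?_⟩
    rcases hconn j0 with h | ⟨i, j', hj'⟩
    · exact h
    · exfalso
      have h1 := hmin j' (Finset.mem_univ _)
      have h2 : (b j0).sum (fun _ e => e) = 1 + (b j').sum (fun _ e => e) := by
        rw [hj', Finsupp.sum_add_index' (fun _ => rfl) (fun _ _ _ => rfl),
          Finsupp.sum_single_index rfl]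
      omega
  -- the column relation
  have hcol : ∀ (i : Fin n) (j j' : Fin r), b j = Finsupp.single i 1 + b j' →
      M i *ᵥ (Pi.single j' (1 : K) : Fin r → K) = Pi.single j (1 : K) := by
    intro i j j' hjj
    apply hmvinj
    rw [Matrix.mulVec_mulVec, hHBM i, Matrix.mulVec_single, Matrix.mulVec_single]
    funext l
    simp only [Pi.smul_apply, MulOpposite.op_one, one_smul, Matrix.col_apply]
    rw [hHBx i, hHB]
    show Λ _ = Λ _
    congr 1
    rw [monomial_mul, one_mul, X_mul_monomial', monomial_mul, one_mul, hjj, add_left_comm]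
  -- ψ sends `b j` to the `j`-th basis vector
  have hψmono : ∀ j, psiL M hc j0 (monomial (b j) 1) = Pi.single j 1 := by
    suffices H : ∀ (dg : ℕ) (j : Fin r), (b j).sum (fun _ e => e) = dg →
        psiL M hc j0 (monomial (b j) 1) = Pi.single j 1 from fun j => H _ j rfl
    intro dg
    induction dg using Nat.strong_induction_on with
    | _ dg ih =>
    intro j hdg
    rcases hconn j with h0 | ⟨i, j', hjj⟩
    · have hjeq : j = j0 := hinj (by rw [h0, hj0])
      subst hjeq
      rw [h0, monomial_zero_one, psiL_one]
    · have hdlt : (b j').sum (fun _ e => e) < dg := by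
        have h2 : (b j).sum (fun _ e => e) = 1 + (b j').sum (fun _ e => e) := by
          rw [hjj, Finsupp.sum_add_index' (fun _ => rfl) (fun _ _ _ => rfl),
            Finsupp.sum_single_index rfl]
        omega
      have hXm : monomial (b j) (1 : K) = X i * monomial (b j') 1 := by
        rw [X_mul_monomial', hjj]
      rw [hXm, psiL_X_mul, ih _ hdlt j' rfl, hcol i j j' hjj]
  -- the extension
  set Λt : Module.Dual K (MvPolynomial (Fin n) K) :=
    (LinearMap.proj j0) ∘ₗ HB.mulVecLin ∘ₗ psiL M hc j0 with hΛtdef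
  have hΛtapp : ∀ p, Λt p = (HB *ᵥ psiL M hc j0 p) j0 := fun p => rfl
  have hkey : ∀ p q, Λt (p * q) = psiL M hc j0 p ⬝ᵥ (HB *ᵥ psiL M hc j0 q) :=
    fun p q => keyProd M hc HB hHBs hMsym j0 p q
  have hψσ : ∀ c : Fin r → K, psiL M hc j0 (sigmaB b c) = c := by
    intro c
    rw [sigmaB_apply, map_sum]
    simp_rw [_root_.map_smul, hψmono]
    exact univ_sum_single_smul c
  have hψsurj : LinearMap.range (psiL M hc j0) = ⊤ :=
    LinearMap.range_eq_top.mpr fun c => ⟨sigmaB b c, hψσ c⟩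
  have hker : LinearMap.ker (hankelOp K n Λt) = LinearMap.ker (psiL M hc j0) := by
    ext p
    simp only [LinearMap.mem_ker]
    constructor
    · intro h
      have hv : HB.vecMul (psiL M hc j0 p) = 0 := by
        funext k
        have h1 : hankelOp K n Λt p (monomial (b k) 1) = 0 := by rw [h]; rfl
        rw [hankelOp_apply, hkey, hψmono, Matrix.mulVec_single] at h1
        simpa [Matrix.vecMul, dotProduct, mul_one] using h1
      apply hvminj
      show Matrix.vecMul (psiL M hc j0 p) HB = Matrix.vecMul 0 HB
      rw [hv, Matrix.zero_vecMul]
    · intro h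
      apply LinearMap.ext
      intro q
      rw [hankelOp_apply, hkey, h, zero_dotProduct]
      rfl
  have hspan : Submodule.span K
      (Set.range fun j => (monomial (b j) (1 : K) : MvPolynomial (Fin n) K)) =
      LinearMap.range (sigmaB b : (Fin r → K) →ₗ[K] MvPolynomial (Fin n) K) :=
    (range_sigmaB b).symm
  have hcompl : IsCompl
      (Submodule.span K (Set.range fun j => (monomial (b j) (1 : K) : MvPolynomial (Fin n) K)))
      (LinearMap.ker (hankelOp K n Λt)) := by
    constructor
    · rw [Submodule.disjoint_def]
      intro p hp hk
      rw [hspan] at hp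
      obtain ⟨c, rfl⟩ := hp
      rw [hker, LinearMap.mem_ker, hψσ] at hk
      rw [hk, map_zero]
    · rw [codisjoint_iff, eq_top_iff]
      intro p _
      have hdecomp : p = sigmaB b (psiL M hc j0 p) + (p - sigmaB b (psiL M hc j0 p)) := by ring
      rw [hdecomp]
      apply Submodule.add_mem
      · apply Submodule.mem_sup_left
        rw [hspan]
        exact ⟨_, rfl⟩
      · apply Submodule.mem_sup_right
        rw [hker, LinearMap.mem_ker, map_sub, hψσ, sub_self]
  -- the rank computation
  set Lop : (Fin r → K) →ₗ[K] Module.Dual K (MvPolynomial (Fin n) K) :=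
    LopD M hc HB j0 with hLopdef
  have hLopapp : ∀ v q, Lop v q = v ⬝ᵥ (HB *ᵥ psiL M hc j0 q) := fun v q => rfl
  have hcomp : hankelOp K n Λt = Lop ∘ₗ psiL M hc j0 :=
    LinearMap.ext fun p => LinearMap.ext fun q => hkey p q
  have hrange : LinearMap.range (hankelOp K n Λt) = LinearMap.range Lop := by
    rw [hcomp, LinearMap.range_comp, hψsurj, Submodule.map_top]
  have hLinj : Function.Injective Lop := by
    rw [← LinearMap.ker_eq_bot]
    apply LinearMap.ker_eq_bot'.mpr
    intro v hv
    have hvm : HB.vecMul v = 0 := by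
      funext k
      have h1 : Lop v (monomial (b k) 1) = 0 := by rw [hv]; rfl
      rw [hLopapp, hψmono, Matrix.mulVec_single] at h1
      simpa [Matrix.vecMul, dotProduct, mul_one] using h1
    apply hvminj
    show Matrix.vecMul v HB = Matrix.vecMul 0 HB
    rw [hvm, Matrix.zero_vecMul]
  -- agreement with Λ on B·B⁺
  have hmemS1 : ∀ j k : Fin r, (monomial (b j) (1 : K)) * monomial (b k) 1 ∈ BBp := by
    intro j k
    rw [hBBp]
    exact Submodule.subset_span (Or.inl ⟨j, k, rfl⟩)
  have hmemS2 : ∀ (i : Fin n) (j k : Fin r),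
      (X i : MvPolynomial (Fin n) K) * ((monomial (b j) (1 : K)) * monomial (b k) 1) ∈ BBp := by
    intro i j k
    rw [hBBp]
    exact Submodule.subset_span (Or.inr ⟨i, j, k, rfl⟩)
  have hΛtS1 : ∀ j k : Fin r, Λt ((monomial (b j) (1 : K)) * monomial (b k) 1) = HB j k := by
    intro j k
    rw [hkey, hψmono, hψmono, Matrix.mulVec_single, single_dotProduct]
    simp
  have hΛtS2 : ∀ (i : Fin n) (j k : Fin r),
      Λt ((X i : MvPolynomial (Fin n) K) * ((monomial (b j) (1 : K)) * monomial (b k) 1)) =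
        (HB * M i) k j := by
    intro i j k
    rw [← mul_assoc, hkey, psiL_X_mul, hψmono, hψmono, Matrix.mulVec_single,
      Matrix.mulVec_single, dotProduct, Matrix.mul_apply]
    apply Finset.sum_congr rfl
    intro l _
    simp only [Pi.smul_apply, MulOpposite.op_one, one_smul, Matrix.col_apply]
    rw [mul_comm, hsym l k]
  have hagree : ∀ p ∈ BBp, Λt p = Λ p := by
    intro p hp
    rw [hBBp] at hp
    induction hp using Submodule.span_induction with
    | mem x hx =>
      rcases hx with ⟨j, k, rfl⟩ | ⟨i, j, k, rfl⟩
      · rw [hΛtS1 j k, hHB]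
        rfl
      · rw [hΛtS2 i j k, hHBM i, hHBx i]
        show Λ _ = Λ _
        rw [mul_comm (monomial (b k) (1 : K))]
    | zero => rw [map_zero, map_zero]
    | add x y hx hy ihx ihy => rw [map_add, map_add, ihx, ihy]
    | smul a x hx ihx => rw [_root_.map_smul, _root_.map_smul, ihx]
  refine ⟨Λt, ⟨hagree, ?_, ?_, hcompl⟩, ?_⟩
  · rw [hrange]
    infer_instance
  · rw [hrange, LinearMap.finrank_range_of_inj hLinj]
    simp [Module.finrank_fin_fun]
  -- uniqueness
  rintro Λ' ⟨hag', -, -, hcompl'⟩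
  have hXker : ∀ (q p : MvPolynomial (Fin n) K), p ∈ LinearMap.ker (hankelOp K n Λ') →
      q * p ∈ LinearMap.ker (hankelOp K n Λ') := by
    intro q p hp
    rw [LinearMap.mem_ker] at hp ⊢
    apply LinearMap.ext
    intro s
    have h1 := LinearMap.ext_iff.mp hp (q * s)
    rw [hankelOp_apply] at h1
    rw [hankelOp_apply]
    have h2 : q * p * s = p * (q * s) := by ring
    rw [h2]
    simpa using h1
  have hkerΛ' : ∀ p ∈ LinearMap.ker (hankelOp K n Λ'), ∀ q, Λ' (q * p) = 0 := by
    intro p hp q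
    have := LinearMap.ext_iff.mp (LinearMap.mem_ker.mp hp) q
    rw [hankelOp_apply] at this
    rw [mul_comm]
    simpa using this
  -- the structural relation in the quotient
  have hlemA : ∀ (i : Fin n) (j' : Fin r),
      (X i : MvPolynomial (Fin n) K) * monomial (b j') 1 -
        sigmaB b (M i *ᵥ (Pi.single j' (1 : K) : Fin r → K)) ∈
        LinearMap.ker (hankelOp K n Λ') := by
    intro i j'
    have hmem : (X i : MvPolynomial (Fin n) K) * monomial (b j') 1 ∈
        (Submodule.span K
          (Set.range fun j => (monomial (b j) (1 : K) : MvPolynomial (Fin n) K))) ⊔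
        (LinearMap.ker (hankelOp K n Λ')) := by
      rw [hcompl'.codisjoint.eq_top]
      trivial
    obtain ⟨s, hs, k, hk, hsk⟩ := Submodule.mem_sup.mp hmem
    rw [hspan] at hs
    obtain ⟨c, rfl⟩ := hs
    have hΛ'S1 : ∀ l m : Fin r, Λ' ((monomial (b l) (1 : K)) * monomial (b m) 1) = HB l m := by
      intro l m
      rw [hag' _ (hmemS1 l m), hHB]
      rfl
    have hc2 : HB *ᵥ c = HB *ᵥ (M i *ᵥ (Pi.single j' (1 : K) : Fin r → K)) := by
      funext l
      have e1 : Λ' (monomial (b l) 1 * sigmaB b c) = (HB *ᵥ c) l := by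
        have he : monomial (b l) (1 : K) * sigmaB b c =
            ∑ m, c m • (monomial (b l) 1 * monomial (b m) 1) := by
          rw [sigmaB_apply, Finset.mul_sum]
          apply Finset.sum_congr rfl
          intro m _
          rw [mul_smul_comm]
        rw [he, map_sum]
        rw [Finset.sum_congr rfl fun m _ => by rw [_root_.map_smul, smul_eq_mul, hΛ'S1 l m]]
        simp [Matrix.mulVec, dotProduct, mul_comm]
      have e2 : Λ' (monomial (b l) 1 * ((X i : MvPolynomial (Fin n) K) * monomial (b j') 1)) =
          (HB *ᵥ (M i *ᵥ (Pi.single j' (1 : K) : Fin r → K))) l := by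
        rw [Matrix.mulVec_mulVec, hHBM i, Matrix.mulVec_single]
        have hq : monomial (b l) (1 : K) * ((X i : MvPolynomial (Fin n) K) * monomial (b j') 1) =
            X i * (monomial (b l) 1 * monomial (b j') 1) := by ring
        rw [hq, hag' _ (hmemS2 i l j'), hHBx i]
        simp
      have e3 : Λ' (monomial (b l) 1 * k) = 0 := hkerΛ' k hk _
      rw [← e1]
      rw [← hsk] at e2
      rw [mul_add, map_add, e3, add_zero] at e2
      rw [e2]
    have hceq : c = M i *ᵥ (Pi.single j' (1 : K) : Fin r → K) := hmvinj hc2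
    have hrw : (X i : MvPolynomial (Fin n) K) * monomial (b j') 1 -
        sigmaB b (M i *ᵥ (Pi.single j' (1 : K) : Fin r → K)) = k := by
      rw [← hceq, ← hsk]
      ring
    rw [hrw]
    exact hk
  have hlemB : ∀ (i : Fin n) (c : Fin r → K),
      (X i : MvPolynomial (Fin n) K) * sigmaB b c - sigmaB b (M i *ᵥ c) ∈
        LinearMap.ker (hankelOp K n Λ') := by
    intro i c
    have h1 : (X i : MvPolynomial (Fin n) K) * sigmaB b c =
        ∑ j', c j' • ((X i : MvPolynomial (Fin n) K) * monomial (b j') 1) := by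
      rw [sigmaB_apply, Finset.mul_sum]
      apply Finset.sum_congr rfl
      intro j' _
      rw [mul_smul_comm]
    have hce : M i *ᵥ c = ∑ j', c j' • (M i *ᵥ (Pi.single j' (1 : K) : Fin r → K)) := by
      conv_lhs => rw [← univ_sum_single_smul c]
      rw [show ∀ v, M i *ᵥ v = (M i).mulVecLin v from fun _ => rfl, map_sum]
      apply Finset.sum_congr rfl
      intro j' _
      rw [_root_.map_smul]
      rfl
    have h2 : sigmaB b (M i *ᵥ c) =
        ∑ j', c j' • sigmaB b (M i *ᵥ (Pi.single j' (1 : K) : Fin r → K)) := by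
      rw [hce, map_sum]
      apply Finset.sum_congr rfl
      intro j' _
      rw [_root_.map_smul]
    rw [h1, h2, ← Finset.sum_sub_distrib]
    apply Submodule.sum_mem
    intro j' _
    rw [← smul_sub]
    exact Submodule.smul_mem _ _ (hlemA i j')
  have hQ : ∀ α : Fin n →₀ ℕ,
      monomial α (1 : K) - sigmaB b (psiL M hc j0 (monomial α 1)) ∈
        LinearMap.ker (hankelOp K n Λ') := by
    apply mono_induction
    · rw [monomial_zero_one, psiL_one, sigmaB_single, hj0, monomial_zero_one, sub_self]
      exact Submodule.zero_mem _
    · intro i α ihα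
      have hXm : monomial (Finsupp.single i 1 + α) (1 : K) = X i * monomial α 1 :=
        (X_mul_monomial' i α).symm
      rw [hXm, psiL_X_mul]
      have hsplit : (X i : MvPolynomial (Fin n) K) * monomial α 1 -
          sigmaB b (M i *ᵥ psiL M hc j0 (monomial α 1)) =
          X i * (monomial α 1 - sigmaB b (psiL M hc j0 (monomial α 1))) +
          (X i * sigmaB b (psiL M hc j0 (monomial α 1)) -
            sigmaB b (M i *ᵥ psiL M hc j0 (monomial α 1))) := by ring
      rw [hsplit]
      exact Submodule.add_mem _ (hXker _ _ ihα) (hlemB i _)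
  have hmono_eq : ∀ α : Fin n →₀ ℕ, Λ' (monomial α 1) = Λt (monomial α 1) := by
    intro α
    have h0 : Λ' (monomial α (1 : K) - sigmaB b (psiL M hc j0 (monomial α 1))) = 0 := by
      have h2 := LinearMap.ext_iff.mp (LinearMap.mem_ker.mp (hQ α)) 1
      rw [hankelOp_apply, mul_one] at h2
      simpa using h2
    rw [map_sub, sub_eq_zero] at h0
    rw [h0]
    have h2 : Λ' (sigmaB b (psiL M hc j0 (monomial α 1))) =
        ∑ k, psiL M hc j0 (monomial α 1) k * HB k j0 := by
      rw [sigmaB_apply, map_sum]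
      apply Finset.sum_congr rfl
      intro k _
      rw [_root_.map_smul, smul_eq_mul]
      congr 1
      have hmk : (monomial (b k) (1 : K)) = monomial (b k) 1 * monomial (b j0) 1 := by
        rw [hj0, monomial_zero_one, mul_one]
      rw [hmk, hag' _ (hmemS1 k j0), hHB]
      rfl
    have h3 : Λt (monomial α 1) = ∑ k, HB j0 k * psiL M hc j0 (monomial α 1) k := by
      rw [hΛtapp]
      rfl
    rw [h2, h3]
    apply Finset.sum_congr rfl
    intro k _
    rw [mul_comm, hsym j0 k]
  apply LinearMap.ext
  intro p
  induction p using MvPolynomial.induction_on' with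
  | monomial α a =>
    have h1 : monomial α a = a • monomial α (1 : K) := by
      rw [smul_monomial, smul_eq_mul, mul_one]
    rw [h1, _root_.map_smul, _root_.map_smul, hmono_eq]
  | add p q ihp ihq => rw [map_add, map_add, ihp, ihq]
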